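/- Let N ≥ 2 and for each i ∈ {1,…,N} let (𝟙_{S_{i,t}})_{t≥1} be an i.i.d. sequence of Bernoulli random variables with success probability p_i, where p_i ≥ p̂/N for a constant p̂ ∈ (1,2] and all the p_i ∈ (0,1]. Let Γ_k(i) = ∑_{t=1}^k 𝟙_{S_{i,t}} and define α_{k,i} = 1/Γ_k(i) (on the event Γ_k(i) ≥ 1). Then for every q ∈ (0, 1/2), almost surely there exists a (random) index k̃ such that for all k ≥ k̃ and all i ∈ {1,…,N}: α_{k,i} ≤ 2/(k p_i) and |α_{k,i} − 1/(k p_i)| ≤ 2/(k^{3/2−q} p̂²). -/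

import Mathlib

open MeasureTheory ProbabilityTheory Real


lemma expAux {x : ℝ} (hx : |x| ≤ 1) : Real.exp x ≤ 1 + x + x ^ 2 := by
  have h := Real.exp_bound hx (by norm_num : (0:ℕ) < 2)
  have h2 : |Real.exp x - (1 + x)| ≤ |x| ^ 2 * (3 / (2 * 2)) := by
    have e : ∑ m ∈ Finset.range 2, x ^ m / m.factorial = 1 + x := by
      simp [Finset.sum_range_succ]
    rw [← e]
    convert h using 2 <;> norm_num [Nat.factorial]
  have := (abs_sub_le_iff.1 h2).1
  have hx2 : |x| ^ 2 = x ^ 2 := sq_abs x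
  nlinarith [sq_nonneg x]

lemma mgfBern {Ω : Type*} [MeasurableSpace Ω] (μ : Measure Ω) [IsProbabilityMeasure μ]
    {s : Set Ω} (hs : MeasurableSet s) {p : ℝ} (hp0 : 0 ≤ p) (hp1 : p ≤ 1)
    (hμs : μ s = ENNReal.ofReal p) {t : ℝ} (ht : |t| ≤ 1) :
    mgf (fun ω => s.indicator (fun _ => (1:ℝ)) ω - p) μ t ≤ Real.exp (t ^ 2) := by
  set Y : Ω → ℝ := fun ω => s.indicator (fun _ => (1:ℝ)) ω - p with hY
  have hYm : Measurable Y := (measurable_const.indicator hs).sub_const p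
  have hYb : ∀ ω, |Y ω| ≤ 1 := by
    intro ω
    rw [hY]
    by_cases h : ω ∈ s <;> simp [Set.indicator_of_mem, Set.indicator_of_notMem, h, abs_le] <;>
      constructor <;> linarith
  have hYint : Integrable Y μ := by
    refine (integrable_const (1:ℝ)).mono' hYm.aestronglyMeasurable ?_
    exact Filter.Eventually.of_forall hYb
  have hEY : ∫ ω, Y ω ∂μ = 0 := by
    rw [hY]
    have : ∫ ω, (s.indicator (fun _ => (1:ℝ)) ω - p) ∂μ
        = (∫ ω, s.indicator (fun _ => (1:ℝ)) ω ∂μ) - ∫ _ω, p ∂μ := by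
      refine integral_sub ?_ (integrable_const p)
      exact (integrable_const (1:ℝ)).mono' (measurable_const.indicator hs).aestronglyMeasurable
        (Filter.Eventually.of_forall fun ω => by
          by_cases h : ω ∈ s <;> simp [Set.indicator_of_mem, Set.indicator_of_notMem, h])
    rw [this, integral_indicator_const _ hs, integral_const]
    simp [measureReal_def, hμs, ENNReal.toReal_ofReal hp0]
  have hpt : ∀ ω, Real.exp (t * Y ω) ≤ 1 + t * Y ω + t ^ 2 := by
    intro ω
    have h1 : |t * Y ω| ≤ 1 := by
      rw [abs_mul]
      calc |t| * |Y ω| ≤ 1 * 1 := mul_le_mul ht (hYb ω) (abs_nonneg _) (le_trans (abs_nonneg _) ht)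
      _ = 1 := by ring
    refine (expAux h1).trans ?_
    have : (t * Y ω) ^ 2 ≤ t ^ 2 := by
      have := hYb ω
      rw [mul_pow]
      have hY2 : Y ω ^ 2 ≤ 1 := by nlinarith [sq_abs (Y ω), abs_nonneg (Y ω), hYb ω]
      nlinarith [sq_nonneg t]
    linarith
  have hint1 : Integrable (fun ω => Real.exp (t * Y ω)) μ := by
    refine (integrable_const (Real.exp |t|)).mono'
      ((hYm.const_mul t).exp).aestronglyMeasurable ?_
    refine Filter.Eventually.of_forall fun ω => ?_
    rw [Real.norm_eq_abs, abs_of_pos (Real.exp_pos _)]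
    refine Real.exp_le_exp.2 ?_
    calc t * Y ω ≤ |t * Y ω| := le_abs_self _
    _ = |t| * |Y ω| := abs_mul _ _
    _ ≤ |t| * 1 := by have := hYb ω; nlinarith [abs_nonneg t]
    _ = |t| := by ring
  have hint2 : Integrable (fun ω => 1 + t * Y ω + t ^ 2) μ :=
    ((integrable_const (1:ℝ)).add (hYint.const_mul t)).add (integrable_const _)
  calc mgf Y μ t = ∫ ω, Real.exp (t * Y ω) ∂μ := rfl
  _ ≤ ∫ ω, (1 + t * Y ω + t ^ 2) ∂μ := integral_mono hint1 hint2 hpt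
  _ = 1 + t * ∫ ω, Y ω ∂μ + t ^ 2 := by
      have e1 : (fun ω => 1 + t * Y ω + t ^ 2)
          = fun ω => ((1:ℝ) + t ^ 2) + t * Y ω := by funext ω; ring
      rw [e1, integral_add (integrable_const _) (hYint.const_mul t), integral_const,
        integral_const_mul]
      simp
      ring
  _ = 1 + t ^ 2 := by rw [hEY]; ring
  _ ≤ Real.exp (t ^ 2) := by linarith [Real.add_one_le_exp (t ^ 2)]


set_option maxHeartbeats 1000000 in
lemma chernoffAux {Ω : Type*} [MeasurableSpace Ω] (μ : Measure Ω) [IsProbabilityMeasure μ]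
    (Y : ℕ → Ω → ℝ) (hind : iIndepFun Y μ)
    (hmeas : ∀ t, Measurable (Y t)) (hbd : ∀ t ω, |Y t ω| ≤ 1) {l : ℝ} (hl0 : 0 ≤ l)
    (hmgf : ∀ t, mgf (Y t) μ l ≤ Real.exp (l ^ 2))
    (s : Finset ℕ) (a : ℝ) :
    (μ {ω | a ≤ ∑ t ∈ s, Y t ω}).toReal ≤ Real.exp (-l * a + s.card * l ^ 2) := by
  have hint : ∀ t : ℕ, Integrable (fun ω => Real.exp (l * Y t ω)) μ := by
    intro t
    refine (integrable_const (Real.exp |l|)).mono'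
      (((hmeas t).const_mul l).exp).aestronglyMeasurable ?_
    refine Filter.Eventually.of_forall fun ω => ?_
    rw [Real.norm_eq_abs, abs_of_pos (Real.exp_pos _)]
    refine Real.exp_le_exp.2 ?_
    calc l * Y t ω ≤ |l * Y t ω| := le_abs_self _
    _ = |l| * |Y t ω| := abs_mul _ _
    _ ≤ |l| * 1 := by have := hbd t ω; nlinarith [abs_nonneg l]
    _ = |l| := by ring
  have hZset : {ω | a ≤ ∑ t ∈ s, Y t ω} = {ω | a ≤ (∑ t ∈ s, Y t) ω} := by
    ext ω; simp [Finset.sum_apply]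
  rw [hZset]
  refine (measure_ge_le_exp_mul_mgf a hl0
    (hind.integrable_exp_mul_sum hmeas (fun t _ => hint t))).trans ?_
  rw [Real.exp_add]
  have hprod : mgf (∑ t ∈ s, Y t) μ l ≤ Real.exp ((s.card : ℝ) * l ^ 2) := by
    rw [hind.mgf_sum hmeas s]
    calc ∏ t ∈ s, mgf (Y t) μ l ≤ ∏ t ∈ s, Real.exp (l ^ 2) :=
          Finset.prod_le_prod (fun t _ => mgf_nonneg) (fun t _ => hmgf t)
    _ = Real.exp ((s.card : ℝ) * l ^ 2) := by
        rw [Finset.prod_const, ← Real.exp_nat_mul]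
  exact mul_le_mul_of_nonneg_left hprod (Real.exp_nonneg _)


lemma summableExp {q : ℝ} (hq0 : 0 < q) :
    Summable (fun k : ℕ => 2 * Real.exp (-(k : ℝ) ^ q / 4)) := by
  obtain ⟨m, hm⟩ : ∃ m : ℕ, 2 ≤ q * m := by
    obtain ⟨m, hm⟩ := exists_nat_ge (2 / q)
    exact ⟨m, by rw [div_le_iff₀ hq0] at hm; linarith [hm]⟩
  set C : ℝ := 4 ^ m * m.factorial with hC
  have hCpos : 0 < C := by positivity
  have hbound : ∀ k : ℕ, 1 ≤ k →
      2 * Real.exp (-(k : ℝ) ^ q / 4) ≤ (2 * C) * (k : ℝ) ^ (-(2 : ℝ)) := by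
    intro k hk
    have hk1 : (1 : ℝ) ≤ (k : ℝ) := by exact_mod_cast hk
    have hk0 : (0 : ℝ) < (k : ℝ) := by linarith
    have hx0 : (0 : ℝ) ≤ (k : ℝ) ^ q / 4 := by positivity
    have h1 : ((k : ℝ) ^ q / 4) ^ m / m.factorial ≤ Real.exp ((k : ℝ) ^ q / 4) := by
      refine le_trans ?_ (Real.sum_le_exp_of_nonneg hx0 (m + 1))
      exact Finset.single_le_sum (f := fun i => ((k : ℝ) ^ q / 4) ^ i / i.factorial)
        (fun i _ => by positivity) (Finset.self_mem_range_succ m)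
    have e1 : ((k : ℝ) ^ q / 4) ^ m / m.factorial = (k : ℝ) ^ (q * m) / C := by
      rw [div_pow, ← Real.rpow_natCast ((k : ℝ) ^ q) m, ← Real.rpow_mul hk0.le, hC, div_div]
    have h2 : (k : ℝ) ^ (2 : ℝ) / C ≤ Real.exp ((k : ℝ) ^ q / 4) := by
      refine le_trans ?_ h1
      rw [e1]
      have := Real.rpow_le_rpow_of_exponent_le hk1 hm
      gcongr
    have h3 : Real.exp (-(k : ℝ) ^ q / 4) ≤ C * (k : ℝ) ^ (-(2 : ℝ)) := by
      have hpos : (0 : ℝ) < (k : ℝ) ^ (2 : ℝ) / C := by positivity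
      have := inv_anti₀ hpos h2
      rw [← Real.exp_neg] at this
      calc Real.exp (-(k : ℝ) ^ q / 4) = Real.exp (-((k : ℝ) ^ q / 4)) := by ring_nf
      _ ≤ ((k : ℝ) ^ (2 : ℝ) / C)⁻¹ := this
      _ = C * (k : ℝ) ^ (-(2 : ℝ)) := by
          rw [Real.rpow_neg hk0.le, inv_div, div_eq_mul_inv]
    linarith
  have hs2 : Summable (fun k : ℕ => (2 * C) * (k : ℝ) ^ (-(2 : ℝ))) :=
    (Real.summable_nat_rpow.mpr (by norm_num)).mul_left (2 * C)
  have hshift : Summable (fun k : ℕ => (2 * C) * ((k + 1 : ℕ) : ℝ) ^ (-(2 : ℝ))) :=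
    (summable_nat_add_iff 1).mpr hs2
  have h4 : Summable (fun k : ℕ => 2 * Real.exp (-((k + 1 : ℕ) : ℝ) ^ q / 4)) :=
    Summable.of_nonneg_of_le (fun k => by positivity)
      (fun k => hbound (k + 1) (by omega)) hshift
  exact (summable_nat_add_iff 1).mp h4

lemma concAux {Ω : Type*} [MeasurableSpace Ω] (μ : Measure Ω) [IsProbabilityMeasure μ]
    {p q : ℝ} (hp0 : 0 < p) (hp1 : p ≤ 1) (hq0 : 0 < q) (hq : q < 1 / 2)
    (S : ℕ → Set Ω) (hSm : ∀ t, MeasurableSet (S t))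
    (hindep : iIndepSet S μ) (hprob : ∀ t, μ (S t) = ENNReal.ofReal p) :
    ∀ᵐ ω ∂μ, ∀ᶠ k : ℕ in Filter.atTop,
      |(∑ t ∈ Finset.Icc 1 k, (S t).indicator (fun _ => (1 : ℝ)) ω) - k * p|
        < (k : ℝ) ^ ((1 + q) / 2) := by
  classical
  set X : ℕ → Ω → ℝ := fun t => (S t).indicator (fun _ => (1 : ℝ)) with hX
  set Y : ℕ → Ω → ℝ := fun t => (fun x => x - p) ∘ X t with hY
  have hXm : ∀ t, Measurable (X t) := fun t => measurable_const.indicator (hSm t)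
  have hYm : ∀ t, Measurable (Y t) := fun t => (hXm t).sub_const p
  have hXind : iIndepFun X μ :=
    hindep.iIndepFun_indicator
  have hYind : iIndepFun Y μ :=
    hXind.comp (fun _ => fun x => x - p) (fun _ => measurable_id.sub_const p)
  have hZind : iIndepFun (fun t => -(Y t)) μ :=
    hYind.comp (fun _ => fun x => -x) (fun _ => measurable_neg)
  have hYb : ∀ t ω, |Y t ω| ≤ 1 := by
    intro t ω
    by_cases h : ω ∈ S t <;>
      simp [hY, hX, Set.indicator_of_mem, Set.indicator_of_notMem, h, abs_le] <;>
      constructor <;> linarith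
  have hZb : ∀ t ω, |(-(Y t)) ω| ≤ 1 := fun t ω => by
    rw [Pi.neg_apply, abs_neg]; exact hYb t ω
  have hmgfY : ∀ l : ℝ, |l| ≤ 1 → ∀ t, mgf (Y t) μ l ≤ Real.exp (l ^ 2) := fun l hl t =>
    mgfBern μ (hSm t) hp0.le hp1 (hprob t) hl
  have hmgfZ : ∀ l : ℝ, |l| ≤ 1 → ∀ t, mgf (-(Y t)) μ l ≤ Real.exp (l ^ 2) := by
    intro l hl t
    rw [mgf_neg]
    calc mgf (Y t) μ (-l) ≤ Real.exp ((-l) ^ 2) := hmgfY (-l) (by rwa [abs_neg]) t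
    _ = Real.exp (l ^ 2) := by ring_nf
  -- the bad sets
  set B : ℕ → Set Ω := fun k =>
    {ω | (k : ℝ) ^ ((1 + q) / 2) ≤ |∑ t ∈ Finset.Icc 1 k, Y t ω|} with hB
  have hBbound : ∀ k : ℕ, μ (B k) ≤ ENNReal.ofReal (2 * Real.exp (-(k : ℝ) ^ q / 4)) := by
    intro k
    rcases Nat.eq_zero_or_pos k with hk | hk
    · subst hk
      have : (0 : ℝ) ^ q = 0 := Real.zero_rpow hq0.ne'
      calc μ (B 0) ≤ 1 := prob_le_one
      _ ≤ ENNReal.ofReal (2 * Real.exp (-(0 : ℕ) ^ q / 4)) := by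
          simp only [Nat.cast_zero, this]
          norm_num
    · have hk1 : (1 : ℝ) ≤ (k : ℝ) := by exact_mod_cast hk
      have hk0 : (0 : ℝ) < (k : ℝ) := by linarith
      set a : ℝ := (k : ℝ) ^ ((1 + q) / 2) with ha
      set c : ℝ := (k : ℝ) ^ ((q - 1) / 2) with hc
      set l : ℝ := c / 2 with hl
      have hcpos : 0 < c := Real.rpow_pos_of_pos hk0 _
      have hc1 : c ≤ 1 := Real.rpow_le_one_of_one_le_of_nonpos hk1 (by linarith)
      have hl0 : 0 ≤ l := by positivity
      have hl1 : |l| ≤ 1 := by rw [abs_of_nonneg hl0, hl]; linarith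
      have e1 : c * a = (k : ℝ) ^ q := by
        rw [hc, ha, ← Real.rpow_add hk0]; ring_nf
      have e2 : (k : ℝ) * c ^ 2 = (k : ℝ) ^ q := by
        rw [hc, sq, ← Real.rpow_add hk0]
        nth_rewrite 1 [← Real.rpow_one (k : ℝ)]
        rw [← Real.rpow_add hk0]; ring_nf
      have hcard : ((Finset.Icc 1 k).card : ℝ) = (k : ℝ) := by
        simp [Nat.card_Icc]
      have eE : -l * a + ((Finset.Icc 1 k).card : ℝ) * l ^ 2 = -(k : ℝ) ^ q / 4 := by
        rw [hcard]
        calc -l * a + (k : ℝ) * l ^ 2 = -(c * a) / 2 + ((k : ℝ) * c ^ 2) / 4 := by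
              rw [hl]; ring
        _ = -(k : ℝ) ^ q / 2 + (k : ℝ) ^ q / 4 := by rw [e1, e2]
        _ = -(k : ℝ) ^ q / 4 := by ring
      have hP := chernoffAux μ Y hYind hYm hYb hl0 (hmgfY l hl1) (Finset.Icc 1 k) a
      have hM := chernoffAux μ (fun t => -(Y t)) hZind (fun t => (hYm t).neg) hZb hl0
        (hmgfZ l hl1) (Finset.Icc 1 k) a
      rw [eE] at hP hM
      have hPe : μ {ω | a ≤ ∑ t ∈ Finset.Icc 1 k, Y t ω}
          ≤ ENNReal.ofReal (Real.exp (-(k : ℝ) ^ q / 4)) := by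
        rw [← ENNReal.ofReal_toReal (measure_ne_top μ _)]
        exact ENNReal.ofReal_le_ofReal hP
      have hMe : μ {ω | a ≤ ∑ t ∈ Finset.Icc 1 k, (-(Y t)) ω}
          ≤ ENNReal.ofReal (Real.exp (-(k : ℝ) ^ q / 4)) := by
        rw [← ENNReal.ofReal_toReal (measure_ne_top μ _)]
        exact ENNReal.ofReal_le_ofReal hM
      have hsub : B k ⊆ {ω | a ≤ ∑ t ∈ Finset.Icc 1 k, Y t ω}
          ∪ {ω | a ≤ ∑ t ∈ Finset.Icc 1 k, (-(Y t)) ω} := by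
        intro ω hω
        have hω' : a ≤ |∑ t ∈ Finset.Icc 1 k, Y t ω| := hω
        rcases le_abs.mp hω' with h | h
        · exact Or.inl h
        · refine Or.inr ?_
          simpa [Finset.sum_neg_distrib] using h
      calc μ (B k) ≤ μ ({ω | a ≤ ∑ t ∈ Finset.Icc 1 k, Y t ω}
            ∪ {ω | a ≤ ∑ t ∈ Finset.Icc 1 k, (-(Y t)) ω}) := measure_mono hsub
      _ ≤ μ {ω | a ≤ ∑ t ∈ Finset.Icc 1 k, Y t ω}
            + μ {ω | a ≤ ∑ t ∈ Finset.Icc 1 k, (-(Y t)) ω} := measure_union_le _ _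
      _ ≤ ENNReal.ofReal (Real.exp (-(k : ℝ) ^ q / 4))
            + ENNReal.ofReal (Real.exp (-(k : ℝ) ^ q / 4)) := add_le_add hPe hMe
      _ = ENNReal.ofReal (2 * Real.exp (-(k : ℝ) ^ q / 4)) := by
          rw [← ENNReal.ofReal_add (Real.exp_nonneg _) (Real.exp_nonneg _)]
          ring_nf
  have htsum : (∑' k, μ (B k)) ≠ ⊤ := by
    have h1 : (∑' k, μ (B k)) ≤ ∑' k : ℕ, ENNReal.ofReal (2 * Real.exp (-(k : ℝ) ^ q / 4)) :=
      ENNReal.tsum_le_tsum hBbound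
    have h2 : (∑' k : ℕ, ENNReal.ofReal (2 * Real.exp (-(k : ℝ) ^ q / 4)))
        = ENNReal.ofReal (∑' k : ℕ, 2 * Real.exp (-(k : ℝ) ^ q / 4)) :=
      (ENNReal.ofReal_tsum_of_nonneg (fun k => by positivity) (summableExp hq0)).symm
    rw [h2] at h1
    exact ne_top_of_le_ne_top ENNReal.ofReal_ne_top h1
  filter_upwards [ae_eventually_notMem htsum] with ω hω
  filter_upwards [hω] with k hk
  have hk' : ¬ ((k : ℝ) ^ ((1 + q) / 2) ≤ |∑ t ∈ Finset.Icc 1 k, Y t ω|) := hk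
  have hsum : ∑ t ∈ Finset.Icc 1 k, Y t ω
      = (∑ t ∈ Finset.Icc 1 k, (S t).indicator (fun _ => (1 : ℝ)) ω) - k * p := by
    simp only [hY, hX, Function.comp_apply, Finset.sum_sub_distrib, Finset.sum_const,
      Nat.card_Icc, smul_eq_mul]
    norm_num
  rw [hsum] at hk'
  exact lt_of_not_ge hk'


lemma evAux {C e : ℝ} (he : 0 < e) : ∀ᶠ k : ℕ in Filter.atTop, C ≤ (k : ℝ) ^ e := by
  have h1 : Filter.Tendsto (fun k : ℕ => (k : ℝ) ^ e) Filter.atTop Filter.atTop :=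
    (tendsto_rpow_atTop he).comp tendsto_natCast_atTop_atTop
  exact h1.eventually_ge_atTop C

lemma detAux {kN N : ℕ} {G p phat q : ℝ}
    (hp0 : 0 < p) (hphat0 : 0 < phat) (hplb : phat / N ≤ p)
    (hq0 : 0 < q) (hq : q < 1 / 2) (hk1 : 1 ≤ kN)
    (hA : |G - kN * p| < (kN : ℝ) ^ ((1 + q) / 2))
    (hB : 2 / p ≤ (kN : ℝ) ^ ((1 - q) / 2))
    (hC : ((N : ℝ)) ^ 2 ≤ (kN : ℝ) ^ (q / 2)) (hN1 : 1 ≤ N) :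
    G⁻¹ ≤ 2 / (kN * p) ∧
      |G⁻¹ - 1 / (kN * p)| ≤ 2 / ((kN : ℝ) ^ ((3 : ℝ) / 2 - q) * phat ^ 2) := by
  have hk1R : (1 : ℝ) ≤ (kN : ℝ) := by exact_mod_cast hk1
  have hk0R : (0 : ℝ) < (kN : ℝ) := by linarith
  have hNR : (0 : ℝ) < (N : ℝ) := by exact_mod_cast hN1
  set kR : ℝ := (kN : ℝ) with hkR
  set a : ℝ := kR ^ ((1 + q) / 2) with ha
  set b : ℝ := kR ^ ((3 : ℝ) / 2 - q) with hb
  have ha0 : 0 < a := Real.rpow_pos_of_pos hk0R _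
  have hb0 : 0 < b := Real.rpow_pos_of_pos hk0R _
  have id1 : a * kR ^ ((1 - q) / 2) = kR := by
    rw [ha, ← Real.rpow_add hk0R]
    have e : (1 + q) / 2 + (1 - q) / 2 = 1 := by ring
    rw [e, Real.rpow_one]
  have h2a : 2 * a ≤ kR * p := by
    have h := mul_le_mul_of_nonneg_left hB ha0.le
    rw [id1] at h
    rw [← mul_div_assoc] at h
    have h' := (div_le_iff₀ hp0).mp h
    linarith
  have hkp0 : 0 < kR * p := by positivity
  have hGge : kR * p / 2 ≤ G := by
    have := (abs_lt.mp hA).1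
    linarith
  have hG0 : 0 < G := lt_of_lt_of_le (by positivity) hGge
  constructor
  · rw [inv_eq_one_div, div_le_div_iff₀ hG0 hkp0]
    linarith
  · have ediff : G⁻¹ - 1 / (kR * p) = (kR * p - G) / (G * (kR * p)) := by
      field_simp
    rw [ediff, abs_div, abs_of_pos (by positivity : (0:ℝ) < G * (kR * p))]
    have habs : |kR * p - G| ≤ a := by
      rw [abs_sub_comm]
      exact (abs_le.mpr ⟨(abs_lt.mp hA).1.le, (abs_lt.mp hA).2.le⟩)
    have idab : a * b = kR ^ (2 - q / 2) := by
      rw [ha, hb, ← Real.rpow_add hk0R]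
      ring_nf
    have id4 : kR ^ ((2 : ℝ)) = kR ^ (2 : ℕ) := by
      rw [← Real.rpow_natCast kR 2]
      norm_num
    have id3 : kR ^ (2 - q / 2) * kR ^ (q / 2) = kR ^ (2 : ℕ) := by
      rw [← Real.rpow_add hk0R, ← id4]
      norm_num
    have h5 : a * b ≤ kR ^ (2 : ℕ) / (N : ℝ) ^ 2 := by
      rw [idab, le_div_iff₀ (by positivity : (0:ℝ) < (N : ℝ) ^ 2)]
      calc kR ^ (2 - q / 2) * (N : ℝ) ^ 2 ≤ kR ^ (2 - q / 2) * kR ^ (q / 2) := by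
            have h0 : (0:ℝ) ≤ kR ^ (2 - q / 2) := (Real.rpow_pos_of_pos hk0R _).le
            exact mul_le_mul_of_nonneg_left hC h0
      _ = kR ^ (2 : ℕ) := id3
    have h6 : (phat / (N : ℝ)) ^ 2 ≤ p ^ 2 := by
      have h0 : (0:ℝ) ≤ phat / (N : ℝ) := by positivity
      exact pow_le_pow_left₀ h0 hplb 2
    have key : a * b * phat ^ 2 ≤ (kR * p) ^ 2 := by
      calc a * b * phat ^ 2 ≤ (kR ^ (2 : ℕ) / (N : ℝ) ^ 2) * phat ^ 2 :=
            mul_le_mul_of_nonneg_right h5 (by positivity)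
      _ = kR ^ (2 : ℕ) * (phat / (N : ℝ)) ^ 2 := by ring
      _ ≤ kR ^ (2 : ℕ) * p ^ 2 := mul_le_mul_of_nonneg_left h6 (by positivity)
      _ = (kR * p) ^ 2 := by ring
    calc |kR * p - G| / (G * (kR * p)) ≤ a / (G * (kR * p)) := by
          gcongr
    _ ≤ 2 / (b * phat ^ 2) := by
        rw [div_le_div_iff₀ (by positivity) (by positivity)]
        have h7 : (kR * p) * (kR * p) ≤ (2 * G) * (kR * p) :=
          mul_le_mul_of_nonneg_right (by linarith) hkp0.le
        nlinarith [key]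


/-- For each agent `i`, let `(𝟙_{S_{i,t}})_{t≥1}` be i.i.d. Bernoulli with success
probability `p_i ≥ p̂/N` (`p̂ ∈ (1,2]`, `p_i ∈ (0,1]`), `Γ_k(i) = ∑_{t=1}^k 𝟙_{S_{i,t}}` and
`α_{k,i} = 1/Γ_k(i)`.  Then for every `q ∈ (0, 1/2)`, almost surely there is a random index `k̃`
such that for all `k ≥ k̃` and all `i`:
`α_{k,i} ≤ 2/(k p_i)` and `|α_{k,i} − 1/(k p_i)| ≤ 2/(k^{3/2−q} p̂²)`. -/
theorem stmt_9 {Ω : Type*} [MeasurableSpace Ω] (μ : Measure Ω) [IsProbabilityMeasure μ]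
    (N : ℕ) (hN : 2 ≤ N) (p : Fin N → ℝ) (phat : ℝ)
    (hphat1 : 1 < phat) (hphat2 : phat ≤ 2)
    (hp0 : ∀ i, 0 < p i) (hp1 : ∀ i, p i ≤ 1) (hplb : ∀ i, phat / N ≤ p i)
    (S : Fin N → ℕ → Set Ω) (hSm : ∀ i t, MeasurableSet (S i t))
    (hindep : ∀ i, iIndepSet (fun t => S i t) μ)
    (hprob : ∀ i t, μ (S i t) = ENNReal.ofReal (p i))
    (Γ : ℕ → Fin N → Ω → ℝ)
    (hΓ : ∀ k i ω, Γ k i ω = ∑ t ∈ Finset.Icc 1 k, (S i t).indicator (fun _ => (1 : ℝ)) ω)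
    (α : ℕ → Fin N → Ω → ℝ) (hα : ∀ k i ω, α k i ω = (Γ k i ω)⁻¹)
    (q : ℝ) (hq0 : 0 < q) (hq : q < 1 / 2) :
    ∀ᵐ ω ∂μ, ∃ ktil : ℕ, ∀ k ≥ ktil, ∀ i,
      α k i ω ≤ 2 / (k * p i) ∧
      |α k i ω - 1 / (k * p i)| ≤ 2 / ((k : ℝ) ^ ((3 : ℝ) / 2 - q) * phat ^ 2) := by
  have key : ∀ i : Fin N, ∀ᵐ ω ∂μ, ∀ᶠ k : ℕ in Filter.atTop,
      |Γ k i ω - k * p i| < (k : ℝ) ^ ((1 + q) / 2) := by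
    intro i
    have h := concAux μ (hp0 i) (hp1 i) hq0 hq (S i) (hSm i) (hindep i) (fun t => hprob i t)
    filter_upwards [h] with ω hω
    filter_upwards [hω] with k hk
    rwa [hΓ k i ω]
  have hae : ∀ᵐ ω ∂μ, ∀ i : Fin N, ∀ᶠ k : ℕ in Filter.atTop,
      |Γ k i ω - k * p i| < (k : ℝ) ^ ((1 + q) / 2) := ae_all_iff.mpr key
  filter_upwards [hae] with ω hω
  have hE1 : ∀ᶠ k : ℕ in Filter.atTop, ∀ i : Fin N, 2 / p i ≤ (k : ℝ) ^ ((1 - q) / 2) :=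
    Filter.eventually_all.mpr fun i => evAux (by linarith)
  have hE2 : ∀ᶠ k : ℕ in Filter.atTop, ((N : ℝ)) ^ 2 ≤ (k : ℝ) ^ (q / 2) :=
    evAux (by linarith)
  have hE0 : ∀ᶠ k : ℕ in Filter.atTop, 1 ≤ k := Filter.eventually_ge_atTop 1
  have hEA : ∀ᶠ k : ℕ in Filter.atTop, ∀ i, |Γ k i ω - k * p i| < (k : ℝ) ^ ((1 + q) / 2) :=
    Filter.eventually_all.mpr hω
  have hall := ((hEA.and hE1).and hE2).and hE0
  rw [Filter.eventually_atTop] at hall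
  obtain ⟨K, hK⟩ := hall
  refine ⟨K, fun k hk i => ?_⟩
  obtain ⟨⟨⟨h1, h2⟩, h3⟩, h4⟩ := hK k hk
  have hres := detAux (hp0 i) (lt_trans one_pos hphat1) (hplb i) hq0 hq h4 (h1 i) (h2 i) h3
    (by omega)
  rw [hα k i ω]
  exact ⟨hres.1, hres.2⟩
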